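/- arXiv:2010.02292 — 2 statements merged into one kernel-verified Lean document; each statement's English description precedes it below -/
import Mathlib

section
/- Let B be a discrete valuation ring with uniformizer t, fraction field F = B[1/t], and let K be a subfield of B. Let D be a finite dimensional K-vector space with a decreasing, exhaustive, separated ℤ-indexed filtration Fil D. Then inside F ⊗_K D one has the equality of B-submodules: Σ_{n∈ℤ} tⁿB ⊗_K Fil₊⁻ⁿD = (Σ_{n∈ℤ} tⁿB ⊗_K Fil⁻ⁿD) + B ⊗_K D, where Fil₊⁻ⁿD = D for −n ≤ 0 and Fil₊⁻ⁿD = Fil⁻ⁿD for −n > 0. -/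
open TensorProduct in
/-- Lemma 2.1.6 abstracted: inside `F ⊗[K] D`, for a DVR `B` with
uniformizer `t` and fraction field `F`, the sum of the `B`-submodules
`tⁿB ⊗ Fil₊⁻ⁿ D` equals the sum of the `tⁿB ⊗ Fil⁻ⁿ D` plus `B ⊗ D`. -/
theorem stmt_5 (K B F : Type*) [Field K] [CommRing B] [IsDomain B]
    [IsDiscreteValuationRing B] [Field F] [Algebra B F] [IsFractionRing B F]
    [Algebra K B] [Algebra K F] [IsScalarTower K B F]
    (t : B) (ht : Irreducible t)
    (D : Type*) [AddCommGroup D] [Module K D] [FiniteDimensional K D]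
    (Fil : ℤ → Submodule K D)
    (hdec : ∀ n : ℤ, Fil (n + 1) ≤ Fil n)
    (hexh : ⨆ n : ℤ, Fil n = ⊤)
    (hsep : ⨅ n : ℤ, Fil n = ⊥)
    (S Sp : ℤ → Submodule B (F ⊗[K] D)) (T : Submodule B (F ⊗[K] D))
    (hS : ∀ n : ℤ, S n = Submodule.span B
      {z | ∃ (x : F) (d : D), x ∈ Submodule.span B {(algebraMap B F t) ^ n} ∧
        d ∈ Fil (-n) ∧ z = x ⊗ₜ[K] d})
    (hSp : ∀ n : ℤ, Sp n = Submodule.span B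
      {z | ∃ (x : F) (d : D), x ∈ Submodule.span B {(algebraMap B F t) ^ n} ∧
        d ∈ (if -n ≤ 0 then ⊤ else Fil (-n)) ∧ z = x ⊗ₜ[K] d})
    (hT : T = Submodule.span B {z | ∃ d : D, z = (1 : F) ⊗ₜ[K] d}) :
    (⨆ n : ℤ, Sp n) = (⨆ n : ℤ, S n) ⊔ T := by
  have hsub : ∀ n : ℤ, S n ≤ Sp n := by
    intro n
    rw [hS n, hSp n]
    apply Submodule.span_mono
    rintro z ⟨x, d, hx, hd, rfl⟩
    refine ⟨x, d, hx, ?_, rfl⟩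
    split
    · trivial
    · exact hd
  apply le_antisymm
  · apply iSup_le
    intro n
    rcases le_or_gt 0 n with hn | hn
    · refine le_trans ?_ le_sup_right
      rw [hSp n, hT]
      apply Submodule.span_le.2
      rintro z ⟨x, d, hx, hd, rfl⟩
      rw [Submodule.mem_span_singleton] at hx
      obtain ⟨b, rfl⟩ := hx
      have hpow : (algebraMap B F t) ^ n = algebraMap B F (t ^ n.toNat) := by
        rw [map_pow, ← zpow_natCast, Int.toNat_of_nonneg hn]
      rw [hpow]
      have h1 : (1 : F) ⊗ₜ[K] d ∈ Submodule.span B {z | ∃ d : D, z = (1 : F) ⊗ₜ[K] d} :=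
        Submodule.subset_span ⟨d, rfl⟩
      have hmem := Submodule.smul_mem _ (b * t ^ n.toNat) h1
      convert hmem using 1
      simp [TensorProduct.smul_tmul', Algebra.smul_def, map_mul, mul_comm]
    · refine le_trans ?_ (le_trans (le_iSup S n) le_sup_left)
      rw [hS n, hSp n]
      apply Submodule.span_mono
      rintro z ⟨x, d, hx, hd, rfl⟩
      rw [if_neg (by omega)] at hd
      exact ⟨x, d, hx, hd, rfl⟩
  · apply sup_le
    · exact iSup_le fun n => (hsub n).trans (le_iSup Sp n)
    · refine le_trans ?_ (le_iSup Sp 0)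
      rw [hT, hSp 0]
      apply Submodule.span_le.2
      rintro z ⟨d, rfl⟩
      exact Submodule.subset_span ⟨1, d, by simpa using Submodule.mem_span_singleton_self (1 : F), by simp, rfl⟩
end

section
/- (Topological snake lemma) Let A → B → C → 0 and 0 → A' → B' → C' be a commutative diagram of topological abelian groups and continuous homomorphisms α : A → A', β : B → B', γ : C → C', whose rows are exact as sequences of abelian groups. Assume the topology of C is the quotient topology from B and the topology of A' is the subspace topology from B'. Endow the kernels of α, β, γ with subspace topologies and the cokernels with quotient topologies. Then there is a connecting continuous homomorphism Ker(γ) → Coker(α) making the sequence Ker(α) → Ker(β) → Ker(γ) → Coker(α) → Coker(β) → Coker(γ) an exact sequence of abelian groups in which all maps are continuous. -/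
/-- topological snake lemma: given a commutative diagram of
topological abelian groups with exact rows `A → B → C → 0` and `0 → A' → B' → C'`,
where `C` carries the quotient topology from `B` and `A'` the subspace topology
from `B'`, there is a six-term exact sequence of kernels and cokernels in which
all maps, including the connecting map, are continuous group homomorphisms. -/
theorem stmt_13
    (A B C A' B' C' : Type*)
    [AddCommGroup A] [TopologicalSpace A] [IsTopologicalAddGroup A]
    [AddCommGroup B] [TopologicalSpace B] [IsTopologicalAddGroup B]
    [AddCommGroup C] [TopologicalSpace C] [IsTopologicalAddGroup C]
    [AddCommGroup A'] [TopologicalSpace A'] [IsTopologicalAddGroup A']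
    [AddCommGroup B'] [TopologicalSpace B'] [IsTopologicalAddGroup B']
    [AddCommGroup C'] [TopologicalSpace C'] [IsTopologicalAddGroup C']
    (f : A →+ B) (g : B →+ C) (f' : A' →+ B') (g' : B' →+ C')
    (α : A →+ A') (β : B →+ B') (γ : C →+ C')
    (hf : Continuous f) (hg : Continuous g) (hf' : Continuous f') (hg' : Continuous g')
    (hα : Continuous α) (hβ : Continuous β) (hγ : Continuous γ)
    (hcomm1 : ∀ a : A, β (f a) = f' (α a))
    (hcomm2 : ∀ b : B, γ (g b) = g' (β b))
    (hrow1 : Function.Exact f g) (hgsurj : Function.Surjective g)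
    (hf'inj : Function.Injective f') (hrow2 : Function.Exact f' g')
    (hquot : Topology.IsQuotientMap g) (hemb : Topology.IsEmbedding f') :
    ∃ (k1 : α.ker →+ β.ker) (k2 : β.ker →+ γ.ker)
      (δ : γ.ker →+ A' ⧸ α.range)
      (c1 : A' ⧸ α.range →+ B' ⧸ β.range)
      (c2 : B' ⧸ β.range →+ C' ⧸ γ.range),
      Continuous k1 ∧ Continuous k2 ∧ Continuous δ ∧ Continuous c1 ∧ Continuous c2 ∧
      (∀ a : α.ker, ((k1 a : B)) = f (a : A)) ∧
      (∀ b : β.ker, ((k2 b : C)) = g (b : B)) ∧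
      (∀ a' : A', c1 (QuotientAddGroup.mk a') = QuotientAddGroup.mk (f' a')) ∧
      (∀ b' : B', c2 (QuotientAddGroup.mk b') = QuotientAddGroup.mk (g' b')) ∧
      Function.Exact k1 k2 ∧ Function.Exact k2 δ ∧
      Function.Exact δ c1 ∧ Function.Exact c1 c2 := by
  classical
  -- kernel maps
  have hk1mem : ∀ a : α.ker, (f.comp α.ker.subtype) a ∈ β.ker := by
    intro a
    rw [AddMonoidHom.mem_ker]
    show β (f (a : A)) = 0
    rw [hcomm1, AddMonoidHom.mem_ker.mp a.2, map_zero]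
  have hk2mem : ∀ b : β.ker, (g.comp β.ker.subtype) b ∈ γ.ker := by
    intro b
    rw [AddMonoidHom.mem_ker]
    show γ (g (b : B)) = 0
    rw [hcomm2, AddMonoidHom.mem_ker.mp b.2, map_zero]
  set k1 : α.ker →+ β.ker := (f.comp α.ker.subtype).codRestrict β.ker hk1mem with hk1def
  set k2 : β.ker →+ γ.ker := (g.comp β.ker.subtype).codRestrict γ.ker hk2mem with hk2def
  have k1app : ∀ a : α.ker, ((k1 a : B)) = f (a : A) := fun a => rfl
  have k2app : ∀ b : β.ker, ((k2 b : C)) = g (b : B) := fun b => rfl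
  -- cokernel maps
  have hle1 : α.range ≤ β.range.comap f' := by
    rintro x ⟨a, rfl⟩
    exact ⟨f a, hcomm1 a⟩
  have hle2 : β.range ≤ γ.range.comap g' := by
    rintro x ⟨b, rfl⟩
    exact ⟨g b, hcomm2 b⟩
  set c1 : A' ⧸ α.range →+ B' ⧸ β.range := QuotientAddGroup.map α.range β.range f' hle1 with hc1def
  set c2 : B' ⧸ β.range →+ C' ⧸ γ.range := QuotientAddGroup.map β.range γ.range g' hle2 with hc2def
  have c1app : ∀ a' : A', c1 (QuotientAddGroup.mk a') = QuotientAddGroup.mk (f' a') :=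
    fun a' => QuotientAddGroup.map_mk α.range β.range f' hle1 a'
  have c2app : ∀ b' : B', c2 (QuotientAddGroup.mk b') = QuotientAddGroup.mk (g' b') :=
    fun b' => QuotientAddGroup.map_mk β.range γ.range g' hle2 b'
  -- the subgroup K = (γ ∘ g).ker and the map ψ : K → A'
  set K : AddSubgroup B := (γ.comp g).ker with hKdef
  have hKmem : ∀ b : B, b ∈ K ↔ γ (g b) = 0 := fun b => Iff.rfl
  have hmem : ∀ b : K, ∃ a' : A', f' a' = β (b : B) := by
    intro b
    have h0 : g' (β (b : B)) = 0 := by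
      rw [← hcomm2, (hKmem (b : B)).mp b.2]
    exact (hrow2 (β (b : B))).mp h0
  have ψspec : ∀ b : K, f' ((hmem b).choose) = β (b : B) := fun b => (hmem b).choose_spec
  set ψ : K →+ A' :=
    { toFun := fun b => (hmem b).choose
      map_zero' := by
        apply hf'inj
        rw [ψspec]
        simp
      map_add' := by
        intro x y
        apply hf'inj
        rw [map_add, ψspec, ψspec, ψspec, AddSubgroup.coe_add, map_add] } with hψdef
  have ψspec' : ∀ b : K, f' (ψ b) = β (b : B) := ψspec
  -- gK : K →+ γ.ker
  have hgKmem : ∀ b : K, (g.comp K.subtype) b ∈ γ.ker := fun b => (hKmem (b : B)).mp b.2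
  set gK : K →+ γ.ker := (g.comp K.subtype).codRestrict γ.ker hgKmem with hgKdef
  have gKapp : ∀ b : K, ((gK b : C)) = g (b : B) := fun b => rfl
  have hgKsurj : Function.Surjective gK := by
    rintro ⟨c, hc⟩
    obtain ⟨b, rfl⟩ := hgsurj c
    have hbK : b ∈ K := by rw [hKmem]; exact hc
    exact ⟨⟨b, hbK⟩, Subtype.ext rfl⟩
  -- δ̃ = mk ∘ ψ kills ker gK
  set δt : K →+ A' ⧸ α.range := (QuotientAddGroup.mk' α.range).comp ψ with hδtdef
  have hker : gK.ker ≤ δt.ker := by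
    intro b hb
    have hgb : g (b : B) = 0 := by
      have := Subtype.ext_iff.mp (AddMonoidHom.mem_ker.mp hb)
      simpa [gKapp] using this
    obtain ⟨a, ha⟩ := (hrow1 (b : B)).mp hgb
    have hψ : ψ b = α a := by
      apply hf'inj
      rw [ψspec', ← ha, hcomm1]
    rw [AddMonoidHom.mem_ker, hδtdef, AddMonoidHom.coe_comp, Function.comp_apply,
      QuotientAddGroup.mk'_apply, QuotientAddGroup.eq_zero_iff, hψ]
    exact ⟨a, rfl⟩
  -- the connecting map
  set δ : γ.ker →+ A' ⧸ α.range :=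
    gK.liftOfRightInverse (Function.surjInv hgKsurj)
      (Function.rightInverse_surjInv hgKsurj) ⟨δt, hker⟩ with hδdef
  have δkey : ∀ b : K, δ (gK b) = QuotientAddGroup.mk (ψ b) := by
    intro b
    have := AddMonoidHom.liftOfRightInverse_comp_apply gK (Function.surjInv hgKsurj)
      (Function.rightInverse_surjInv hgKsurj) ⟨δt, hker⟩ b
    exact this
  -- continuity of k1, k2
  have hk1cont : Continuous k1 :=
    Continuous.subtype_mk (hf.comp continuous_subtype_val) _
  have hk2cont : Continuous k2 :=
    Continuous.subtype_mk (hg.comp continuous_subtype_val) _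
  -- continuity of c1, c2
  have hc1cont : Continuous c1 := by
    rw [(QuotientAddGroup.isQuotientMap_mk α.range).continuous_iff]
    have heq : (c1 ∘ (QuotientAddGroup.mk : A' → A' ⧸ α.range)) =
        ((QuotientAddGroup.mk : B' → B' ⧸ β.range) ∘ f') := funext fun a' => c1app a'
    rw [heq]
    exact continuous_quotient_mk'.comp hf'
  have hc2cont : Continuous c2 := by
    rw [(QuotientAddGroup.isQuotientMap_mk β.range).continuous_iff]
    have heq : (c2 ∘ (QuotientAddGroup.mk : B' → B' ⧸ β.range)) =
        ((QuotientAddGroup.mk : C' → C' ⧸ γ.range) ∘ g') := funext fun b' => c2app b'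
    rw [heq]
    exact continuous_quotient_mk'.comp hg'
  -- g is an open map
  have hgopen : IsOpenMap g := by
    intro U hU
    rw [← hquot.isOpen_preimage]
    have hset : g ⁻¹' (g '' U) = ⋃ k : g.ker, (fun x => x + (k : B)) '' U := by
      ext x
      simp only [Set.mem_preimage, Set.mem_image, Set.mem_iUnion]
      constructor
      · rintro ⟨u, hu, huv⟩
        refine ⟨⟨x - u, ?_⟩, u, hu, by simp⟩
        rw [AddMonoidHom.mem_ker, map_sub, huv, sub_self]
      · rintro ⟨k, u, hu, rfl⟩
        exact ⟨u, hu, by rw [map_add, AddMonoidHom.mem_ker.mp k.2, add_zero]⟩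
    rw [hset]
    exact isOpen_iUnion fun k => (Homeomorph.addRight (k : B)).isOpenMap U hU
  -- gK (as a map of topological spaces) is a quotient map
  have hgKcont : Continuous gK :=
    Continuous.subtype_mk (hg.comp continuous_subtype_val) _
  have hgKopen : IsOpenMap gK := by
    intro V hV
    obtain ⟨W, hW, rfl⟩ := isOpen_induced_iff.mp hV
    have hkey : (gK '' (Subtype.val ⁻¹' W)) = Subtype.val ⁻¹' (g '' W) := by
      ext c
      simp only [Set.mem_image, Set.mem_preimage]
      constructor
      · rintro ⟨b, hb, rfl⟩
        exact ⟨(b : B), hb, rfl⟩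
      · rintro ⟨w, hw, hwc⟩
        have hwK : w ∈ K := by
          rw [hKmem, hwc]
          exact c.2
        refine ⟨⟨w, hwK⟩, hw, Subtype.ext hwc⟩
    rw [hkey]
    exact (hgopen W hW).preimage continuous_subtype_val
  have hgKquot : Topology.IsQuotientMap gK := hgKopen.isQuotientMap hgKcont hgKsurj
  -- continuity of ψ and δ
  have hψcont : Continuous ψ := by
    rw [hemb.continuous_iff]
    have heq : (f' ∘ ψ) = (β ∘ (Subtype.val : K → B)) := funext fun b => ψspec' b
    rw [heq]
    exact hβ.comp continuous_subtype_val
  have hδcont : Continuous δ := by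
    rw [hgKquot.continuous_iff]
    have heq : (δ ∘ gK) = ((QuotientAddGroup.mk : A' → A' ⧸ α.range) ∘ ψ) :=
      funext fun b => δkey b
    rw [heq]
    exact continuous_quotient_mk'.comp hψcont
  -- exactness at ker β
  have hex1 : Function.Exact k1 k2 := by
    intro b
    constructor
    · intro hb
      have hgb : g (b : B) = 0 := by
        have := Subtype.ext_iff.mp hb
        simpa [k2app] using this
      obtain ⟨a, ha⟩ := (hrow1 (b : B)).mp hgb
      have haker : a ∈ α.ker := by
        rw [AddMonoidHom.mem_ker]
        apply hf'inj
        rw [← hcomm1, ha, AddMonoidHom.mem_ker.mp b.2, map_zero]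
      exact ⟨⟨a, haker⟩, Subtype.ext ha⟩
    · rintro ⟨a, rfl⟩
      apply Subtype.ext
      rw [k2app, k1app]
      exact (hrow1.apply_apply_eq_zero (a : A))
  -- exactness at ker γ
  have hex2 : Function.Exact k2 δ := by
    intro c
    obtain ⟨b, rfl⟩ := hgKsurj c
    rw [δkey]
    constructor
    · intro hc
      rw [QuotientAddGroup.eq_zero_iff] at hc
      obtain ⟨a, ha⟩ := hc
      have hbker : β ((b : B) - f a) = 0 := by
        rw [map_sub, hcomm1, ha, ψspec', sub_self]
      refine ⟨⟨(b : B) - f a, hbker⟩, Subtype.ext ?_⟩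
      rw [k2app, gKapp, map_sub, hrow1.apply_apply_eq_zero, sub_zero]
    · rintro ⟨x, hx⟩
      rw [QuotientAddGroup.eq_zero_iff]
      -- gK b = k2 x, so g (b - x) = 0 … show ψ b ∈ α.range
      have hgbx : g ((b : B) - (x : B)) = 0 := by
        have := Subtype.ext_iff.mp hx
        rw [k2app, gKapp] at this
        rw [map_sub, this, sub_self]
      obtain ⟨a, ha⟩ := (hrow1 _).mp hgbx
      refine ⟨a, hf'inj ?_⟩
      rw [ψspec', ← hcomm1, ha, map_sub, AddMonoidHom.mem_ker.mp x.2, sub_zero]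
  -- exactness at A' ⧸ α.range
  have hex3 : Function.Exact δ c1 := by
    intro y
    constructor
    · intro hy
      obtain ⟨a', rfl⟩ := QuotientAddGroup.mk'_surjective α.range y
      rw [QuotientAddGroup.mk'_apply, c1app, QuotientAddGroup.eq_zero_iff] at hy
      obtain ⟨b, hb⟩ := hy
      have hbK : b ∈ K := by
        rw [hKmem, hcomm2, hb, (hrow2.apply_apply_eq_zero a')]
      have hψb : ψ ⟨b, hbK⟩ = a' := hf'inj (by rw [ψspec']; exact hb)
      exact ⟨gK ⟨b, hbK⟩, by rw [δkey, hψb, QuotientAddGroup.mk'_apply]⟩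
    · rintro ⟨c, rfl⟩
      obtain ⟨b, rfl⟩ := hgKsurj c
      rw [δkey, c1app, QuotientAddGroup.eq_zero_iff, ψspec']
      exact ⟨(b : B), rfl⟩
  -- exactness at B' ⧸ β.range
  have hex4 : Function.Exact c1 c2 := by
    intro y
    obtain ⟨b', rfl⟩ := QuotientAddGroup.mk'_surjective β.range y
    rw [QuotientAddGroup.mk'_apply, c2app]
    constructor
    · intro hy
      rw [QuotientAddGroup.eq_zero_iff] at hy
      obtain ⟨c, hc⟩ := hy
      obtain ⟨b, rfl⟩ := hgsurj c
      have h0 : g' (b' - β b) = 0 := by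
        rw [map_sub, ← hc, hcomm2, sub_self]
      obtain ⟨a', ha'⟩ := (hrow2 _).mp h0
      refine ⟨QuotientAddGroup.mk a', ?_⟩
      rw [c1app, ha']
      rw [QuotientAddGroup.eq_iff_sub_mem]
      simp
    · rintro ⟨x, hx⟩
      obtain ⟨a', rfl⟩ := QuotientAddGroup.mk'_surjective α.range x
      rw [QuotientAddGroup.mk'_apply, c1app, QuotientAddGroup.eq_iff_sub_mem] at hx
      obtain ⟨m, hm⟩ := hx
      rw [QuotientAddGroup.eq_zero_iff]
      refine ⟨g (-m), ?_⟩
      rw [hcomm2, map_neg, hm, neg_sub, map_sub, hrow2.apply_apply_eq_zero, sub_zero]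
  exact ⟨k1, k2, δ, c1, c2, hk1cont, hk2cont, hδcont, hc1cont, hc2cont,
    k1app, k2app, c1app, c2app, hex1, hex2, hex3, hex4⟩
end
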